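/- arXiv:1509.03818 — 4 statements merged into one kernel-verified Lean document; each statement's English description precedes it below -/
import Mathlib

section
/- If a family S of matrix-valued signals is shift-invariant and satisfies the fatness condition A3 with respect to a concatenable subfamily F, then ρ(S) = μ(F), where μ(F) := limsup_{t→∞} sup{‖R‖^{1/t} : R ∈ Φ(F_t)}. -/
open Filter Set
open scoped ENNReal Topology

noncomputable section

abbrev Euc (n : ℕ) := EuclideanSpace ℝ (Fin n)
abbrev Mat (n : ℕ) := Euc n →L[ℝ] Euc n

/-- The set `F_∞` of infinite concatenations `A₁∗A₂∗⋯` of signals `A_k ∈ F_{t_k}` with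
`Σ t_k = ∞`. -/
def InftyConcat {n : ℕ} (F : ℝ → Set (ℝ → Mat n)) : Set (ℝ → Mat n) :=
  {A | ∃ (t : ℕ → ℝ) (B : ℕ → ℝ → Mat n),
    (∀ k, 0 ≤ t k) ∧ (∀ k, B k ∈ F (t k)) ∧
    Tendsto (fun k => ∑ i ∈ Finset.range k, t i) atTop atTop ∧
    ∀ k, ∀ u ∈ Ico (∑ i ∈ Finset.range k, t i) (∑ i ∈ Finset.range (k + 1), t i),
      A u = B k (u - ∑ i ∈ Finset.range k, t i)}

/-- The set of flows at time `t` : `Φ(F_t) = {Φ_A(t,0) : A ∈ F_t}`. -/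
def PhiF {n : ℕ} (F : ℝ → Set (ℝ → Mat n)) (Φ : (ℝ → Mat n) → ℝ → ℝ → Mat n)
    (t : ℝ) : Set (Mat n) :=
  {R | ∃ A ∈ F t, R = Φ A t 0}

/-- If the family `S` of signals is shift-invariant (A0) and satisfies the
fatness condition (A3) with respect to a concatenable subfamily `F` (with `F_∞ ⊆ S`), then the
generalized spectral radius of `S` coincides with
`μ(F) = limsup_{t→∞} sup {‖R‖^{1/t} : R ∈ Φ(F_t)}`.  The flow `Φ A t s` is axiomatized by
its identity, cocycle, locality and shift properties. -/
theorem stmt4 (n : ℕ) (S : Set (ℝ → Mat n)) (F : ℝ → Set (ℝ → Mat n))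
    (Φ : (ℝ → Mat n) → ℝ → ℝ → Mat n)
    -- axioms of fundamental matrices
    (hΦid : ∀ A s, Φ A s s = 1)
    (hΦcoc : ∀ A s u t, s ≤ u → u ≤ t → Φ A t u ∘L Φ A u s = Φ A t s)
    (hΦloc : ∀ A B s t, s ≤ t → (∀ u ∈ Ico s t, A u = B u) → Φ A t s = Φ B t s)
    (hΦshift : ∀ A (r s t : ℝ), Φ (fun u => A (r + u)) t s = Φ A (r + t) (r + s))
    -- (A0) shift-invariance of S
    (hA0 : ∀ A ∈ S, ∀ r : ℝ, 0 ≤ r → (fun u => A (r + u)) ∈ S)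
    -- (A3) fatness
    (hsub : InftyConcat F ⊆ S)
    (C Δ : ℝ) (hC : 0 ≤ C) (hΔ : 0 ≤ Δ)
    (𝒦 : Set (Mat n)ˣ) (h𝒦 : IsCompact 𝒦)
    (hfat : ∀ t : ℝ, 0 ≤ t → ∀ A ∈ S, ∃ K ∈ 𝒦, ∃ th ∈ Icc t (t + Δ),
      ∃ Ru : (Mat n)ˣ, (Ru : Mat n) ∈ PhiF F Φ th ∧
        ‖Φ A t 0 ∘L ((K * Ru⁻¹ : (Mat n)ˣ) : Mat n)‖ ≤ C)
    (hfatId : ∀ t : ℝ, 0 ≤ t → ∀ A ∈ InftyConcat F, ∃ th ∈ Icc t (t + Δ),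
      ∃ Ru : (Mat n)ˣ, (Ru : Mat n) ∈ PhiF F Φ th ∧
        ‖Φ A t 0 ∘L ((Ru⁻¹ : (Mat n)ˣ) : Mat n)‖ ≤ C) :
    Filter.limsup (fun t : ℝ => ⨆ A ∈ S, ENNReal.ofReal (‖Φ A t 0‖ ^ (1 / t))) atTop
      = Filter.limsup
          (fun t : ℝ => ⨆ R ∈ PhiF F Φ t, ENNReal.ofReal (‖R‖ ^ (1 / t))) atTop := by
  classical
  -- key: any A ∈ F t (t > 0) extends to an infinite concatenation with the same flow on [0,t]
  have key : ∀ t : ℝ, 0 < t → ∀ A ∈ F t, ∃ B ∈ InftyConcat F, Φ B t 0 = Φ A t 0 := by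
    intro t ht A hA
    set B : ℝ → Mat n := fun u => A (u - t * (⌊u / t⌋ : ℤ)) with hBdef
    have hfloor : ∀ (k : ℕ) (u : ℝ), (k : ℝ) * t ≤ u → u < ((k : ℝ) + 1) * t →
        ⌊u / t⌋ = (k : ℤ) := by
      intro k u h1 h2
      rw [Int.floor_eq_iff]
      constructor
      · push_cast
        rw [le_div_iff₀ ht]; linarith
      · push_cast
        rw [div_lt_iff₀ ht]; linarith
    have hBmem : B ∈ InftyConcat F := by
      refine ⟨fun _ => t, fun _ => A, fun _ => ht.le, fun _ => hA, ?_, ?_⟩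
      · simp only [Finset.sum_const, Finset.card_range, nsmul_eq_mul]
        exact Tendsto.atTop_mul_const ht tendsto_natCast_atTop_atTop
      · intro k u hu
        simp only [Finset.sum_const, Finset.card_range, nsmul_eq_mul] at hu ⊢
        obtain ⟨h1, h2⟩ := hu
        have hf : ⌊u / t⌋ = (k : ℤ) := by
          refine hfloor k u h1 ?_
          push_cast at h2 ⊢
          linarith
        show A (u - t * (⌊u / t⌋ : ℤ)) = A (u - (k : ℝ) * t)
        rw [hf]; congr 1; push_cast; ring
    refine ⟨B, hBmem, hΦloc B A 0 t ht.le ?_⟩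
    intro u hu
    obtain ⟨h1, h2⟩ := hu
    have hf : ⌊u / t⌋ = (0 : ℤ) := by
      have := hfloor 0 u (by simpa using h1) (by simpa using h2)
      simpa using this
    show A (u - t * (⌊u / t⌋ : ℤ)) = A u
    rw [hf]; norm_num
  refine le_antisymm ?_ ?_
  · -- limsup over S ≤ limsup over Φ(F)
    rcases S.eq_empty_or_nonempty with hS | ⟨A₀, hA₀⟩
    · have : (fun t : ℝ => ⨆ A ∈ S, ENNReal.ofReal (‖Φ A t 0‖ ^ (1 / t)))
          = fun _ => (⊥ : ℝ≥0∞) := by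
        funext t
        simp only [hS, Set.mem_empty_iff_false, iSup_false, iSup_bot]
      rw [this, limsup_const]
      exact bot_le
    -- S nonempty ⇒ 𝒦 nonempty; get uniform bound M on ‖K⁻¹‖
    obtain ⟨K₁, hK₁, _⟩ := hfat 0 le_rfl A₀ hA₀
    obtain ⟨K₀, hK₀, hMmax⟩ := h𝒦.exists_isMaxOn ⟨K₁, hK₁⟩
      ((Units.continuous_coe_inv.norm).continuousOn :
        ContinuousOn (fun K : (Mat n)ˣ => ‖((K⁻¹ : (Mat n)ˣ) : Mat n)‖) 𝒦)
    set M : ℝ := ‖((K₀⁻¹ : (Mat n)ˣ) : Mat n)‖ with hMdef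
    have hM0 : 0 ≤ M := norm_nonneg _
    -- suffices to bound by every ofReal a above the RHS limsup
    set L₂ := Filter.limsup
      (fun t : ℝ => ⨆ R ∈ PhiF F Φ t, ENNReal.ofReal (‖R‖ ^ (1 / t))) atTop with hL₂
    suffices hsuf : ∀ a : ℝ, L₂ < ENNReal.ofReal a →
        Filter.limsup (fun t : ℝ => ⨆ A ∈ S, ENNReal.ofReal (‖Φ A t 0‖ ^ (1 / t))) atTop
          ≤ ENNReal.ofReal a by
      by_contra hcon
      push_neg at hcon
      obtain ⟨d, hd1, hd2⟩ := exists_between hcon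
      have hdtop : d ≠ ⊤ := ne_top_of_lt hd2
      have := hsuf d.toReal (by rwa [ENNReal.ofReal_toReal hdtop])
      rw [ENNReal.ofReal_toReal hdtop] at this
      exact absurd this (not_le_of_gt hd2)
    intro a ha
    have ha0 : 0 < a := by
      have : (0 : ℝ≥0∞) < ENNReal.ofReal a := lt_of_le_of_lt zero_le ha
      rwa [ENNReal.ofReal_pos] at this
    have hev : ∀ᶠ t : ℝ in atTop,
        (⨆ R ∈ PhiF F Φ t, ENNReal.ofReal (‖R‖ ^ (1 / t))) < ENNReal.ofReal a :=
      Filter.eventually_lt_of_limsup_lt ha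
    obtain ⟨T, hT⟩ := Filter.eventually_atTop.1 hev
    set T' : ℝ := max T 1 with hT'def
    -- norm bound for elements of Φ(F_s), s ≥ T'
    have hnorm : ∀ s : ℝ, T' ≤ s → ∀ R ∈ PhiF F Φ s, ‖R‖ ≤ a ^ s := by
      intro s hs R hR
      have hs1 : (1 : ℝ) ≤ s := le_trans (le_max_right T 1) hs
      have hs0 : (0 : ℝ) < s := lt_of_lt_of_le one_pos hs1
      have hterm : ENNReal.ofReal (‖R‖ ^ (1 / s)) < ENNReal.ofReal a :=
        lt_of_le_of_lt
          (le_biSup (fun R => ENNReal.ofReal (‖R‖ ^ (1 / s))) hR)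
          (hT s (le_trans (le_max_left T 1) hs))
      have hlt : ‖R‖ ^ (1 / s) < a := (ENNReal.ofReal_lt_ofReal_iff ha0).1 hterm
      have hid : (‖R‖ ^ (1 / s)) ^ s = ‖R‖ := by
        rw [← Real.rpow_mul (norm_nonneg R), one_div_mul_cancel hs0.ne', Real.rpow_one]
      calc ‖R‖ = (‖R‖ ^ (1 / s)) ^ s := hid.symm
        _ ≤ a ^ s := Real.rpow_le_rpow (Real.rpow_nonneg (norm_nonneg R) _) hlt.le hs0.le
    set D : ℝ := max 1 (a ^ Δ) with hDdef
    have hD1 : (1:ℝ) ≤ D := le_max_left _ _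
    set E : ℝ := max (C * M * D) 1 with hEdef
    have hE1 : (1:ℝ) ≤ E := le_max_right _ _
    have hE0 : (0:ℝ) < E := lt_of_lt_of_le one_pos hE1
    have hpow : ∀ t th : ℝ, t ≤ th → th ≤ t + Δ → a ^ th ≤ a ^ t * D := by
      intro t th h1 h2
      rcases le_total 1 a with h | h
      · calc a ^ th ≤ a ^ (t + Δ) := Real.rpow_le_rpow_of_exponent_le h h2
          _ = a ^ t * a ^ Δ := Real.rpow_add ha0 t Δ
          _ ≤ a ^ t * D :=
              mul_le_mul_of_nonneg_left (le_max_right _ _) (Real.rpow_nonneg ha0.le t)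
      · calc a ^ th ≤ a ^ t := Real.rpow_le_rpow_of_exponent_ge ha0 h h1
          _ = a ^ t * 1 := (mul_one _).symm
          _ ≤ a ^ t * D := mul_le_mul_of_nonneg_left hD1 (Real.rpow_nonneg ha0.le t)
    have hbound : ∀ t : ℝ, T' ≤ t → ∀ A ∈ S, ‖Φ A t 0‖ ≤ E * a ^ t := by
      intro t htT A hA
      have ht0 : (0:ℝ) ≤ t := le_trans zero_le_one (le_trans (le_max_right T 1) htT)
      obtain ⟨K, hK, th, hth, Ru, hRu, hle⟩ := hfat t ht0 A hA
      have hRuN : ‖(Ru : Mat n)‖ ≤ a ^ th := hnorm th (le_trans htT hth.1) _ hRu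
      have hKinv : ‖((K⁻¹ : (Mat n)ˣ) : Mat n)‖ ≤ M := hMmax hK
      have hunit : (K * Ru⁻¹) * (Ru * K⁻¹) = (1 : (Mat n)ˣ) := by group
      have hdecomp : Φ A t 0
          = (Φ A t 0 * ((K * Ru⁻¹ : (Mat n)ˣ) : Mat n)) * ((Ru * K⁻¹ : (Mat n)ˣ) : Mat n) := by
        rw [mul_assoc, ← Units.val_mul, hunit, Units.val_one, mul_one]
      calc ‖Φ A t 0‖
          = ‖(Φ A t 0 * ((K * Ru⁻¹ : (Mat n)ˣ) : Mat n)) * ((Ru * K⁻¹ : (Mat n)ˣ) : Mat n)‖ := by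
            rw [← hdecomp]
        _ ≤ ‖Φ A t 0 * ((K * Ru⁻¹ : (Mat n)ˣ) : Mat n)‖ * ‖((Ru * K⁻¹ : (Mat n)ˣ) : Mat n)‖ :=
            norm_mul_le _ _
        _ ≤ C * (‖(Ru : Mat n)‖ * ‖((K⁻¹ : (Mat n)ˣ) : Mat n)‖) := by
            refine mul_le_mul ?_ ?_ (norm_nonneg _) hC
            · rw [ContinuousLinearMap.mul_def]; exact hle
            · rw [Units.val_mul]; exact norm_mul_le _ _
        _ ≤ C * ((a ^ th) * M) :=
            mul_le_mul_of_nonneg_left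
              (mul_le_mul hRuN hKinv (norm_nonneg _) (Real.rpow_nonneg ha0.le th)) hC
        _ ≤ C * ((a ^ t * D) * M) :=
            mul_le_mul_of_nonneg_left
              (mul_le_mul_of_nonneg_right (hpow t th hth.1 hth.2) hM0) hC
        _ = (C * M * D) * a ^ t := by ring
        _ ≤ E * a ^ t :=
            mul_le_mul_of_nonneg_right (le_max_left _ _) (Real.rpow_nonneg ha0.le t)
    have hfinal : ∀ᶠ t : ℝ in atTop,
        (⨆ A ∈ S, ENNReal.ofReal (‖Φ A t 0‖ ^ (1 / t))) ≤ ENNReal.ofReal (E ^ (1 / t) * a) := by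
      filter_upwards [eventually_ge_atTop T'] with t htT
      have ht1 : (1:ℝ) ≤ t := le_trans (le_max_right T 1) htT
      have ht0 : (0:ℝ) < t := lt_of_lt_of_le one_pos ht1
      refine iSup₂_le fun A hA => ENNReal.ofReal_le_ofReal ?_
      calc ‖Φ A t 0‖ ^ (1 / t) ≤ (E * a ^ t) ^ (1 / t) :=
            Real.rpow_le_rpow (norm_nonneg _) (hbound t htT A hA) (by positivity)
        _ = E ^ (1 / t) * a := by
            rw [Real.mul_rpow hE0.le (Real.rpow_nonneg ha0.le t),
              ← Real.rpow_mul ha0.le, mul_one_div_cancel ht0.ne', Real.rpow_one]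
    refine le_trans (Filter.limsup_le_limsup hfinal) ?_
    have hlim : Tendsto (fun t : ℝ => ENNReal.ofReal (E ^ (1 / t) * a)) atTop
        (𝓝 (ENNReal.ofReal a)) := by
      have h2 : Tendsto (fun t : ℝ => 1 / t) atTop (𝓝 0) := by
        simpa [one_div] using (tendsto_inv_atTop_zero (𝕜 := ℝ))
      have h1 : Tendsto (fun t : ℝ => E ^ (1 / t)) atTop (𝓝 1) := by
        have h3 := (Real.continuousAt_const_rpow (b := 0) hE0.ne').tendsto.comp h2
        simpa [Real.rpow_zero, Function.comp_def] using h3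
      have h4 : Tendsto (fun t : ℝ => E ^ (1 / t) * a) atTop (𝓝 a) := by
        simpa using h1.mul_const a
      exact (ENNReal.continuous_ofReal.tendsto a).comp h4
    rw [hlim.limsup_eq]
  · -- limsup over Φ(F) ≤ limsup over S
    refine Filter.limsup_le_limsup ?_
    filter_upwards [eventually_gt_atTop (0 : ℝ)] with t ht
    refine iSup₂_le fun R hR => ?_
    obtain ⟨A, hAF, rfl⟩ := hR
    obtain ⟨B, hBmem, hBeq⟩ := key t ht A hAF
    calc ENNReal.ofReal (‖Φ A t 0‖ ^ (1 / t))
        = ENNReal.ofReal (‖Φ B t 0‖ ^ (1 / t)) := by rw [hBeq]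
      _ ≤ ⨆ A ∈ S, ENNReal.ofReal (‖Φ A t 0‖ ^ (1 / t)) :=
          le_biSup (fun A => ENNReal.ofReal (‖Φ A t 0‖ ^ (1 / t))) (hsub hBmem)
end
end

section
/- Define R_∞ as the set of limits of sequences μ^{-t_k} R_k with R_k ∈ Φ(F_{t_k}) and t_k → ∞, where μ = μ(F) > 0. If Φ(F) is a quasi-extremal semigroup (‖R‖ ≤ C_qe μ^t for R ∈ Φ(F_t)), then R_∞ is a compact multiplicative semigroup, and for every t ≥ 0, T ∈ Φ(F_t) and S ∈ R_∞, both μ^{-t}TS and μ^{-t}ST belong to R_∞. -/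
open Filter Set
open scoped Topology

noncomputable section

set_option synthInstance.maxHeartbeats 1000000 in
/-- Let `R_∞` be the set of limits of sequences `μ^{-t_k} R_k` with
`R_k ∈ P t_k = Φ(F_{t_k})` and `t_k → ∞`.  If the family `P` is concatenable
(`P s · P t ⊆ P (s+t)`) and quasi-extremal (`‖R‖ ≤ C_qe μ^t` on `P t`), then `R_∞` is a
compact multiplicative semigroup and for every `t ≥ 0`, `T ∈ P t` and `S ∈ R_∞`, both
`μ^{-t} T S` and `μ^{-t} S T` belong to `R_∞`. -/
theorem stmt7 (n : ℕ) (P : ℝ → Set (Mat n)) (μ Cqe : ℝ) (hμ : 0 < μ) (hCqe : 0 < Cqe)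
    (hconc : ∀ s t : ℝ, 0 ≤ s → 0 ≤ t → ∀ R ∈ P s, ∀ Q ∈ P t, Q ∘L R ∈ P (s + t))
    (hqe : ∀ t : ℝ, 0 ≤ t → ∀ R ∈ P t, ‖R‖ ≤ Cqe * μ ^ t) :
    let Rinf : Set (Mat n) := {R | ∃ (tk : ℕ → ℝ) (Rk : ℕ → Mat n),
      (∀ k, 0 ≤ tk k ∧ Rk k ∈ P (tk k)) ∧ Tendsto tk atTop atTop ∧
      Tendsto (fun k => (μ ^ tk k)⁻¹ • Rk k) atTop (nhds R)}
    IsCompact Rinf ∧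
    (∀ R ∈ Rinf, ∀ Q ∈ Rinf, Q ∘L R ∈ Rinf) ∧
    (∀ t : ℝ, 0 ≤ t → ∀ T ∈ P t, ∀ Q ∈ Rinf,
      (μ ^ t)⁻¹ • (T ∘L Q) ∈ Rinf ∧ (μ ^ t)⁻¹ • (Q ∘L T) ∈ Rinf) := by
  intro Rinf
  have hμt : ∀ t : ℝ, (0:ℝ) < μ ^ t := fun t => Real.rpow_pos_of_pos hμ t
  -- every element of Rinf has norm ≤ Cqe
  have hbound : ∀ R ∈ Rinf, ‖R‖ ≤ Cqe := by
    rintro R ⟨tk, Rk, hk, htk, hlim⟩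
    refine le_of_tendsto hlim.norm (Eventually.of_forall fun k => ?_)
    rw [norm_smul ((μ ^ tk k)⁻¹) (Rk k), norm_inv, Real.norm_of_nonneg (hμt _).le]
    have h1 := hqe (tk k) (hk k).1 (Rk k) (hk k).2
    calc (μ ^ tk k)⁻¹ * ‖Rk k‖ ≤ (μ ^ tk k)⁻¹ * (Cqe * μ ^ tk k) := by
          exact mul_le_mul_of_nonneg_left h1 (inv_nonneg.2 (hμt _).le)
      _ = Cqe := by
          rw [mul_comm Cqe, ← mul_assoc, inv_mul_cancel₀ (hμt _).ne', one_mul]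
  -- Rinf as a countable intersection of closures (diagonal argument)
  have hset : Rinf = ⋂ N : ℕ, closure {X : Mat n |
      ∃ t : ℝ, (N:ℝ) ≤ t ∧ ∃ R' ∈ P t, (μ ^ t)⁻¹ • R' = X} := by
    ext R
    constructor
    · rintro ⟨tk, Rk, hk, htk, hlim⟩
      refine mem_iInter.2 fun N => mem_closure_of_tendsto hlim ?_
      filter_upwards [htk.eventually_ge_atTop (N:ℝ)] with k hkN
      exact ⟨tk k, hkN, Rk k, (hk k).2, rfl⟩
    · intro hR
      have hchoice : ∀ k : ℕ, ∃ X : Mat n,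
          (∃ t : ℝ, (k:ℝ) ≤ t ∧ ∃ R' ∈ P t, (μ ^ t)⁻¹ • R' = X) ∧
          dist R X < 1 / (k + 1) := by
        intro k
        rcases Metric.mem_closure_iff.1 (mem_iInter.1 hR k) (1 / (k + 1)) (by positivity)
          with ⟨X, hX, hd⟩
        exact ⟨X, hX, hd⟩
      choose X hX hdist using hchoice
      choose t ht R' hR' hXeq using hX
      refine ⟨t, R', fun k => ⟨le_trans (Nat.cast_nonneg k) (ht k), hR' k⟩,
        tendsto_atTop_mono ht tendsto_natCast_atTop_atTop, ?_⟩
      have : Tendsto X atTop (𝓝 R) := by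
        rw [tendsto_iff_dist_tendsto_zero]
        refine squeeze_zero (fun k => dist_nonneg) (fun k => (dist_comm (X k) R ▸ (hdist k).le))
          tendsto_one_div_add_atTop_nhds_zero_nat
      simpa only [hXeq] using this
  have hclosed : IsClosed Rinf := hset ▸ isClosed_iInter fun _ => isClosed_closure
  refine ⟨?_, ?_, ?_⟩
  · -- compact
    haveI : ProperSpace (Mat n) := FiniteDimensional.proper_real (Mat n)
    refine Metric.isCompact_of_isClosed_isBounded hclosed ?_
    refine (Metric.isBounded_closedBall (x := (0 : Mat n)) (r := Cqe)).subset fun R hR => ?_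
    simpa [mem_closedBall_zero_iff] using hbound R hR
  · -- semigroup
    rintro R ⟨tk, Rk, hk, htk, hlim⟩ Q ⟨sk, Qk, hk', hsk, hlim'⟩
    refine ⟨fun k => tk k + sk k, fun k => Qk k ∘L Rk k,
      fun k => ⟨add_nonneg (hk k).1 (hk' k).1,
        hconc (tk k) (sk k) (hk k).1 (hk' k).1 (Rk k) (hk k).2 (Qk k) (hk' k).2⟩,
      htk.atTop_add_atTop hsk, ?_⟩
    have key : ∀ k, (μ ^ (tk k + sk k))⁻¹ • (Qk k ∘L Rk k)
        = ((μ ^ sk k)⁻¹ • Qk k) ∘L ((μ ^ tk k)⁻¹ • Rk k) := by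
      intro k
      rw [ContinuousLinearMap.smul_comp, ContinuousLinearMap.comp_smul, smul_smul,
        Real.rpow_add hμ, mul_inv, mul_comm]
    simp only [key]
    exact hlim'.mul hlim
  · -- ideal property
    rintro t ht T hT Q ⟨sk, Qk, hk, hsk, hlim⟩
    constructor
    · refine ⟨fun k => sk k + t, fun k => T ∘L Qk k,
        fun k => ⟨add_nonneg (hk k).1 ht, hconc (sk k) t (hk k).1 ht (Qk k) (hk k).2 T hT⟩,
        tendsto_atTop_add_const_right _ t hsk, ?_⟩
      have key : ∀ k, (μ ^ (sk k + t))⁻¹ • (T ∘L Qk k)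
          = (μ ^ t)⁻¹ • (T ∘L ((μ ^ sk k)⁻¹ • Qk k)) := by
        intro k
        rw [ContinuousLinearMap.comp_smul, smul_smul, Real.rpow_add hμ, mul_inv, mul_comm]
      simp only [key]
      exact ((tendsto_const_nhds.mul hlim)).const_smul _
    · refine ⟨fun k => t + sk k, fun k => Qk k ∘L T,
        fun k => ⟨add_nonneg ht (hk k).1, hconc t (sk k) ht (hk k).1 T hT (Qk k) (hk k).2⟩,
        tendsto_atTop_add_const_left _ t hsk, ?_⟩
      have key : ∀ k, (μ ^ (t + sk k))⁻¹ • (Qk k ∘L T)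
          = (μ ^ t)⁻¹ • (((μ ^ sk k)⁻¹ • Qk k) ∘L T) := by
        intro k
        rw [ContinuousLinearMap.smul_comp, smul_smul, Real.rpow_add hμ, mul_inv]
      simp only [key]
      exact ((hlim.mul tendsto_const_nhds)).const_smul _
end
end

section
/- Extremal norm construction: let R_∞ ⊂ M_n(ℝ) be a compact irreducible semigroup containing a nonzero element, satisfying μ^{-t}TS ∈ R_∞ and μ^{-t}ST ∈ R_∞ for every T ∈ Φ(F_t) and S ∈ R_∞. Then v̂(x) := max_{R∈R_∞} ‖Rx‖ defines a norm on ℝⁿ, and the induced operator norm satisfies ‖T‖_{v̂} ≤ μ^t for every t ≥ 0 and T ∈ Φ(F_t). -/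
open Filter Set
open scoped Topology

noncomputable section

/-- Extremal norm construction: if `R_∞` is a compact irreducible semigroup
of matrices containing a nonzero element and satisfying the ideal property
`μ^{-t} S T ∈ R_∞` for `T ∈ P t = Φ(F_t)`, `S ∈ R_∞`, then
`v̂(x) := sup_{R ∈ R_∞} ‖R x‖` is a norm on `ℝⁿ` and the induced operator norm satisfies
`‖T‖_{v̂} ≤ μ^t` for every `t ≥ 0` and `T ∈ P t`, i.e. `v̂(T x) ≤ μ^t v̂(x)` for all `x`. -/
theorem stmt8 (n : ℕ) (P : ℝ → Set (Mat n)) (Rinf : Set (Mat n)) (μ : ℝ) (hμ : 0 < μ)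
    (hcomp : IsCompact Rinf)
    (hne : ∃ R ∈ Rinf, R ≠ 0)
    (hirr : ∀ V : Submodule ℝ (Euc n),
      (∀ R ∈ Rinf, ∀ x ∈ V, R x ∈ V) → V = ⊥ ∨ V = ⊤)
    (hsemi : ∀ R ∈ Rinf, ∀ Q ∈ Rinf, Q ∘L R ∈ Rinf)
    (hidealL : ∀ t : ℝ, 0 ≤ t → ∀ T ∈ P t, ∀ Q ∈ Rinf, (μ ^ t)⁻¹ • (Q ∘L T) ∈ Rinf)
    (hidealR : ∀ t : ℝ, 0 ≤ t → ∀ T ∈ P t, ∀ Q ∈ Rinf, (μ ^ t)⁻¹ • (T ∘L Q) ∈ Rinf) :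
    let v : Euc n → ℝ := fun x => sSup {r : ℝ | ∃ R ∈ Rinf, r = ‖R x‖}
    (∀ x, 0 ≤ v x) ∧
    (∀ x, v x = 0 ↔ x = 0) ∧
    (∀ (c : ℝ) (x : Euc n), v (c • x) = |c| * v x) ∧
    (∀ x y : Euc n, v (x + y) ≤ v x + v y) ∧
    (∀ t : ℝ, 0 ≤ t → ∀ T ∈ P t, ∀ x : Euc n, v (T x) ≤ μ ^ t * v x) := by

  intro v
  obtain ⟨R₀, hR₀, hR₀ne⟩ := hne
  have hRne : Rinf.Nonempty := ⟨R₀, hR₀⟩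
  -- the sup is attained
  have key : ∀ x : Euc n, ∃ R ∈ Rinf, v x = ‖R x‖ ∧ ∀ Q ∈ Rinf, ‖Q x‖ ≤ v x := by
    intro x
    have hc : Continuous fun R : Mat n => ‖R x‖ :=
      ((ContinuousLinearMap.apply ℝ (Euc n) x).continuous).norm
    obtain ⟨R, hR, hmax⟩ := hcomp.exists_isMaxOn hRne hc.continuousOn
    have hgr : IsGreatest {r : ℝ | ∃ R ∈ Rinf, r = ‖R x‖} ‖R x‖ := by
      constructor
      · exact ⟨R, hR, rfl⟩
      · rintro r ⟨Q, hQ, rfl⟩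
        exact hmax hQ
    have hv : v x = ‖R x‖ := hgr.csSup_eq
    refine ⟨R, hR, hv, ?_⟩
    intro Q hQ
    rw [hv]
    exact hmax hQ
  have hnonneg : ∀ x, 0 ≤ v x := by
    intro x
    obtain ⟨R, hR, hv, _⟩ := key x
    rw [hv]; exact norm_nonneg _
  refine ⟨hnonneg, ?_, ?_, ?_, ?_⟩
  · -- definiteness
    intro x
    constructor
    · intro hvx
      have hall : ∀ Q ∈ Rinf, Q x = 0 := by
        intro Q hQ
        obtain ⟨R, hR, hv, hub⟩ := key x
        have := hub Q hQ
        rw [hvx] at this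
        exact norm_le_zero_iff.mp this
      -- irreducibility argument
      set V : Submodule ℝ (Euc n) := ⨅ R ∈ Rinf, LinearMap.ker ((R : Euc n →L[ℝ] Euc n) : Euc n →ₗ[ℝ] Euc n) with hV
      have hmem : ∀ y : Euc n, y ∈ V ↔ ∀ R ∈ Rinf, R y = 0 := by
        intro y
        simp [hV, Submodule.mem_iInf, LinearMap.mem_ker]
      have hinv : ∀ R ∈ Rinf, ∀ y ∈ V, R y ∈ V := by
        intro R hR y hy
        rw [hmem] at hy
        rw [hmem]
        intro S hS
        rw [hy R hR]
        simp
      rcases hirr V hinv with h | h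
      · have : x ∈ V := (hmem x).mpr hall
        rw [h] at this
        simpa using this
      · exfalso
        refine hR₀ne (ContinuousLinearMap.ext fun y => ?_)
        have hy : y ∈ V := by rw [h]; trivial
        rw [hmem] at hy
        simpa using hy R₀ hR₀
    · intro hx
      obtain ⟨R, hR, hv, _⟩ := key x
      rw [hv, hx]
      simp
  · -- homogeneity
    intro c x
    obtain ⟨R, hR, hvc, hubc⟩ := key (c • x)
    obtain ⟨S, hS, hvx, hubx⟩ := key x
    apply le_antisymm
    · rw [hvc]
      have : ‖R (c • x)‖ = |c| * ‖R x‖ := by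
        rw [map_smul, norm_smul, Real.norm_eq_abs]
      rw [this]
      exact mul_le_mul_of_nonneg_left (hubx R hR) (abs_nonneg c)
    · rw [hvx]
      have : |c| * ‖S x‖ = ‖S (c • x)‖ := by
        rw [map_smul, norm_smul, Real.norm_eq_abs]
      rw [this]
      exact hubc S hS
  · -- triangle inequality
    intro x y
    obtain ⟨R, hR, hv, _⟩ := key (x + y)
    obtain ⟨_, _, _, hubx⟩ := key x
    obtain ⟨_, _, _, huby⟩ := key y
    rw [hv]
    calc ‖R (x + y)‖ ≤ ‖R x‖ + ‖R y‖ := by rw [map_add]; exact norm_add_le _ _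
      _ ≤ v x + v y := add_le_add (hubx R hR) (huby R hR)
  · -- extremality
    intro t ht T hT x
    obtain ⟨Q, hQ, hvTx, _⟩ := key (T x)
    obtain ⟨_, _, _, hubx⟩ := key x
    have hμt : (0:ℝ) < μ ^ t := Real.rpow_pos_of_pos hμ t
    have hSin : (μ ^ t)⁻¹ • (Q ∘L T) ∈ Rinf := hidealL t ht T hT Q hQ
    have hle : ‖((μ ^ t)⁻¹ • (Q ∘L T)) x‖ ≤ v x := hubx _ hSin
    have heq : ‖((μ ^ t)⁻¹ • (Q ∘L T)) x‖ = (μ ^ t)⁻¹ * ‖Q (T x)‖ := by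
      rw [ContinuousLinearMap.smul_apply, ContinuousLinearMap.comp_apply, norm_smul,
        Real.norm_eq_abs, abs_of_pos (inv_pos.mpr hμt)]
    rw [hvTx]
    rw [heq] at hle
    calc ‖Q (T x)‖ = μ ^ t * ((μ ^ t)⁻¹ * ‖Q (T x)‖) := by
          rw [← mul_assoc, mul_inv_cancel₀ hμt.ne', one_mul]
      _ ≤ μ ^ t * v x := mul_le_mul_of_nonneg_left hle hμt.le
end
end

section
/- The reachable set of a switched linear control system under arbitrary switching with a finite set of modes {(A_i, B_i)}_{i=1}^k is contained in V, where V = Σ_{j≥1} V_j, V₁ = D₁ + ⋯ + D_k with D_i = Im[B_i, A_iB_i, …, A_i^{n-1}B_i], and V_{j+1} = Γ_{A_1}V_j + ⋯ + Γ_{A_k}V_j with Γ_A W = W + AW + ⋯ + A^{n-1}W. Equivalently, V is the smallest subspace containing all Im B_i and invariant under all A_i, and every point reachable from 0 by a piecewise constant switching law and measurable control lies in V. -/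
open Filter MeasureTheory Set Polynomial
open scoped Topology

noncomputable section

lemma pow_mem_of_inv {n : ℕ} (f : Mat n) (W : Submodule ℝ (Euc n))
    (hW : ∀ z ∈ W, f z ∈ W) : ∀ (j : ℕ) (z : Euc n), z ∈ W → (f ^ j) z ∈ W := by
  intro j
  induction j with
  | zero => simp
  | succ j ih =>
    intro z hz
    rw [pow_succ, ContinuousLinearMap.mul_apply]
    exact ih _ (hW z hz)

lemma pow_mem_of_lt {n : ℕ} (hn : 0 < n) (f : Mat n) (z : Euc n) (W : Submodule ℝ (Euc n))
    (h : ∀ j < n, (f ^ j) z ∈ W) (p : ℕ) : (f ^ p) z ∈ W := by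
  set F : Euc n →ₗ[ℝ] Euc n := (f : Euc n →ₗ[ℝ] Euc n) with hF
  have happ : ∀ (p : ℕ) (w : Euc n), (f ^ p) w = (F ^ p) w := by
    intro p w
    rw [Module.End.pow_apply, FunLike.coe_pow_eq_iterate]
    rfl
  set q : ℝ[X] := (X : ℝ[X]) ^ n - F.charpoly with hq
  have hdeg : q.natDegree < n := by
    by_cases h0 : q = 0
    · simpa [h0] using hn
    have hmonic := F.charpoly_monic
    have hnd : F.charpoly.natDegree = n := by
      rw [LinearMap.charpoly_natDegree]; exact finrank_euclideanSpace_fin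
    have hd : q.degree < (n : ℕ) := by
      have := Polynomial.degree_sub_lt (p := (X : ℝ[X]) ^ n) (q := F.charpoly)
        (by rw [Polynomial.degree_X_pow, Polynomial.degree_eq_natDegree hmonic.ne_zero, hnd])
        (pow_ne_zero _ Polynomial.X_ne_zero)
        (by simp [Polynomial.leadingCoeff_X_pow, hmonic.leadingCoeff])
      rwa [Polynomial.degree_X_pow] at this
    exact (Polynomial.natDegree_lt_iff_degree_lt h0).mpr hd
  have hFn : (F ^ n : Euc n →ₗ[ℝ] Euc n) = Polynomial.aeval F q := by
    have h0 := LinearMap.aeval_self_charpoly F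
    rw [hq, map_sub, h0, sub_zero, Polynomial.aeval_X_pow]
  induction p using Nat.strong_induction_on with
  | _ p ih =>
    rcases lt_or_ge p n with hp | hp
    · exact h p hp
    · have key : (f ^ p) z = ∑ i ∈ Finset.range n, q.coeff i • (f ^ (p - n + i)) z := by
        rw [happ]
        have h1 : (F ^ p : Euc n →ₗ[ℝ] Euc n) = F ^ (p - n) * F ^ n := by
          rw [← pow_add]; congr 1; omega
        rw [h1, Module.End.mul_apply, hFn, Polynomial.aeval_eq_sum_range' hdeg,
          LinearMap.sum_apply, map_sum]
        refine Finset.sum_congr rfl fun i hi => ?_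
        rw [LinearMap.smul_apply, LinearMap.map_smul, happ, ← Module.End.mul_apply, ← pow_add]
      rw [key]
      refine Submodule.sum_mem _ fun i hi => Submodule.smul_mem _ _ ?_
      exact ih _ (by have := Finset.mem_range.mp hi; omega)

/-- The recursively defined subspaces `V_j` of the reachability construction:
`V₁ = D₁ + ⋯ + D_k` with `D_i = Im[B_i, A_iB_i, …, A_i^{n-1}B_i]`, and
`V_{j+1} = Γ_{A_1}V_j + ⋯ + Γ_{A_k}V_j` with `Γ_A W = W + AW + ⋯ + A^{n-1}W`. -/
def Vj (n m k : ℕ) (A : Fin k → Mat n) (B : Fin k → (Euc m →L[ℝ] Euc n)) :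
    ℕ → Submodule ℝ (Euc n)
  | 0 => Submodule.span ℝ
      {v : Euc n | ∃ i : Fin k, ∃ j < n, ∃ w : Euc m, v = (A i ^ j) (B i w)}
  | (j + 1) => Submodule.span ℝ
      {v : Euc n | ∃ i : Fin k, ∃ jj < n, ∃ w ∈ Vj n m k A B j, v = (A i ^ jj) w}

/-- The reachable set from the origin of the switched linear control system
`ẋ = A_{σ(t)} x + B_{σ(t)} u` (with `k` modes, switching signal `σ` and locally integrable
control `u`, in Carathéodory integral form) is contained in `V = Σ_{j≥1} V_j`; moreover `V`
coincides with the smallest subspace containing all `Im B_i` and invariant under all `A_i`. -/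
theorem stmt13 (n m k : ℕ) (A : Fin k → Mat n) (B : Fin k → (Euc m →L[ℝ] Euc n))
    (σ : ℝ → Fin k) (u : ℝ → Euc m) (x : ℝ → Euc n)
    (hx : ∀ t : ℝ, x t = ∫ s in (0 : ℝ)..t, (A (σ s) (x s) + B (σ s) (u s)))
    (hint : ∀ t : ℝ, 0 < t →
      IntervalIntegrable (fun s => A (σ s) (x s) + B (σ s) (u s)) volume 0 t) :
    (⨆ j, Vj n m k A B j)
        = sInf {W : Submodule ℝ (Euc n) |
            (∀ i, ∀ v : Euc m, B i v ∈ W) ∧ (∀ i, ∀ z ∈ W, A i z ∈ W)} ∧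
    ∀ t : ℝ, 0 ≤ t → x t ∈ ⨆ j, Vj n m k A B j := by
  rcases Nat.eq_zero_or_pos n with hn | hn
  · subst hn
    haveI hs : Subsingleton (Euc 0) :=
      (Module.finrank_zero_iff (R := ℝ)).mp (by simp [finrank_euclideanSpace_fin])
    refine ⟨Subsingleton.elim _ _, fun t ht => ?_⟩
    have h0 : x t = 0 := Subsingleton.elim _ _
    rw [h0]
    exact Submodule.zero_mem _
  have i₀ : Fin k := σ 0
  have hmono : ∀ j, Vj n m k A B j ≤ Vj n m k A B (j + 1) := by
    intro j z hz
    rw [Vj]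
    exact Submodule.subset_span ⟨i₀, 0, hn, z, hz, by simp⟩
  have hBV : ∀ i v, B i v ∈ ⨆ j, Vj n m k A B j := by
    intro i v
    refine le_iSup (Vj n m k A B) 0 ?_
    rw [Vj]
    exact Submodule.subset_span ⟨i, 0, hn, v, by simp⟩
  have hAV : ∀ i z, z ∈ (⨆ j, Vj n m k A B j) → A i z ∈ ⨆ j, Vj n m k A B j := by
    intro i z hz
    have hdir : Directed (· ≤ ·) (Vj n m k A B) := (monotone_nat_of_le_succ hmono).directed_le
    obtain ⟨j, hj⟩ := (Submodule.mem_iSup_of_directed _ hdir).mp hz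
    have h1 : (A i ^ 1) z ∈ Vj n m k A B (j + 1) := by
      refine pow_mem_of_lt hn (A i) z _ (fun jj hjj => ?_) 1
      rw [Vj]
      exact Submodule.subset_span ⟨i, jj, hjj, z, hj, rfl⟩
    exact le_iSup (Vj n m k A B) (j + 1) (by simpa using h1)
  refine ⟨le_antisymm (le_sInf ?_) (sInf_le ⟨hBV, hAV⟩), ?_⟩
  · rintro W ⟨hBW, hAW⟩
    refine iSup_le fun j => ?_
    induction j with
    | zero =>
      rw [Vj]
      refine Submodule.span_le.mpr ?_
      rintro v ⟨i, jj, hjj, w, rfl⟩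
      exact pow_mem_of_inv (A i) W (hAW i) jj _ (hBW i w)
    | succ j ih =>
      rw [Vj]
      refine Submodule.span_le.mpr ?_
      rintro v ⟨i, jj, hjj, w, hw, rfl⟩
      exact pow_mem_of_inv (A i) W (hAW i) jj _ (ih hw)
  · set V : Submodule ℝ (Euc n) := ⨆ j, Vj n m k A B j with hVdef
    intro t ht
    set f : ℝ → Euc n := fun s => A (σ s) (x s) + B (σ s) (u s) with hf
    rcases eq_or_lt_of_le ht with h0 | hT
    · rw [← h0, hx 0, intervalIntegral.integral_same]
      exact V.zero_mem
    set π : Mat n := ContinuousLinearMap.id ℝ (Euc n) - V.subtypeL.comp (V.orthogonalProjection)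
      with hπ
    have hπ0 : ∀ v ∈ V, π v = 0 := by
      intro v hv
      simp [hπ, ContinuousLinearMap.sub_apply, ← Submodule.starProjection_apply,
        Submodule.starProjection_eq_self_iff.mpr hv]
    have hπmem : ∀ w, w - π w ∈ V := by
      intro w
      simp [hπ, ContinuousLinearMap.sub_apply]
    have hπA : ∀ i w, π (A i w) = π (A i (π w)) := by
      intro i w
      have h1 : π (A i w) - π (A i (π w)) = 0 := by
        rw [← map_sub, ← map_sub]
        exact hπ0 _ (hAV i _ (hπmem w))
      exact sub_eq_zero.mp h1
    set y : ℝ → Euc n := fun s => π (x s) with hy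
    set C : ℝ := ∑ i : Fin k, ‖π.comp (A i)‖ with hC
    have hC0 : 0 ≤ C := Finset.sum_nonneg fun i _ => norm_nonneg _
    have hCb : ∀ i : Fin k, ‖π.comp (A i)‖ ≤ C := fun i =>
      Finset.single_le_sum (f := fun i : Fin k => ‖π.comp (A i)‖)
        (fun j _ => norm_nonneg _) (Finset.mem_univ i)
    have hbound : ∀ s, ‖π (f s)‖ ≤ C * ‖y s‖ := by
      intro s
      have h1 : π (f s) = (π.comp (A (σ s))) (y s) := by
        have : π (f s) = π (A (σ s) (x s)) := by
          rw [hf, map_add, hπ0 _ (hBV (σ s) (u s)), add_zero]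
        rw [this, ContinuousLinearMap.comp_apply, hy]
        exact hπA (σ s) (x s)
      rw [h1]
      exact le_trans ((π.comp (A (σ s))).le_opNorm _)
        (mul_le_mul_of_nonneg_right (hCb _) (norm_nonneg _))
    have hfW : IntervalIntegrable f volume 0 t := hint t hT
    have hxc : ContinuousOn x (Icc 0 t) := by
      have hI : IntegrableOn f (uIcc 0 t) volume := by
        rw [uIcc_of_le ht]
        exact (integrableOn_Icc_iff_integrableOn_Ioc (f := f)).mpr hfW.1
      have h2 := intervalIntegral.continuousOn_primitive_interval hI
      rw [uIcc_of_le ht] at h2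
      exact h2.congr fun r _ => hx r
    have hyc : ContinuousOn y (Icc 0 t) := π.continuous.comp_continuousOn hxc
    obtain ⟨M, hM⟩ := isCompact_Icc.exists_bound_of_continuousOn hyc
    have hyint : ∀ r ∈ Icc (0:ℝ) t, y r = ∫ s in (0:ℝ)..r, π (f s) := by
      intro r hr
      rcases eq_or_lt_of_le hr.1 with h0 | hrpos
      · rw [← h0, intervalIntegral.integral_same, hy]
        simp only []
        rw [hx 0, intervalIntegral.integral_same, map_zero]
      · rw [hy]
        simp only []
        rw [hx r, ← ContinuousLinearMap.intervalIntegral_comp_comm π (hint r hrpos)]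
    have hπfint : ∀ r ∈ Icc (0:ℝ) t, IntervalIntegrable (fun s => π (f s)) volume 0 r := by
      intro r hr
      have h1 : IntervalIntegrable f volume 0 r := hfW.mono_set
        (by rw [uIcc_of_le hr.1, uIcc_of_le ht]; exact Icc_subset_Icc le_rfl hr.2)
      exact ⟨π.integrable_comp h1.1, π.integrable_comp h1.2⟩
    have key : ∀ N : ℕ, ∀ r ∈ Icc (0:ℝ) t, ‖y r‖ ≤ M * (C * r) ^ N / N.factorial := by
      intro N
      induction N with
      | zero => intro r hr; simpa using hM r hr
      | succ N ih =>
        intro r hr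
        have hr0 : (0:ℝ) ≤ r := hr.1
        calc ‖y r‖ = ‖∫ s in (0:ℝ)..r, π (f s)‖ := by rw [hyint r hr]
          _ ≤ ∫ s in (0:ℝ)..r, ‖π (f s)‖ := intervalIntegral.norm_integral_le_integral_norm hr0
          _ ≤ ∫ s in (0:ℝ)..r, C * (M * (C * s) ^ N / N.factorial) := by
              refine intervalIntegral.integral_mono_on hr0 ((hπfint r hr).norm)
                (Continuous.intervalIntegrable (by fun_prop) _ _) fun s hs => ?_
              have hs' : s ∈ Icc (0:ℝ) t := ⟨hs.1, hs.2.trans hr.2⟩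
              exact le_trans (hbound s) (mul_le_mul_of_nonneg_left (ih s hs') hC0)
          _ = M * (C * r) ^ (N + 1) / (N + 1).factorial := by
              have hps : ∀ s : ℝ, C * (M * (C * s) ^ N / N.factorial)
                  = (C ^ (N + 1) * M / N.factorial) * s ^ N := by
                intro s; rw [mul_pow]; ring
              simp_rw [hps]
              rw [intervalIntegral.integral_const_mul, integral_pow, Nat.factorial_succ]
              have hNf : (N.factorial : ℝ) ≠ 0 := Nat.cast_ne_zero.mpr N.factorial_ne_zero
              push_cast
              field_simp
              ring
    have h0 : ‖y t‖ ≤ 0 := by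
      have h1 : Filter.Tendsto (fun N : ℕ => M * (C * t) ^ N / N.factorial)
          Filter.atTop (nhds 0) := by
        have h2 := (FloorSemiring.tendsto_pow_div_factorial_atTop (C * t)).const_mul M
        simpa [mul_div_assoc] using h2
      exact ge_of_tendsto' h1 (fun N => key N t ⟨ht, le_rfl⟩)
    have hy0 : y t = 0 := norm_le_zero_iff.mp h0
    have h2 := hπmem (x t)
    rw [show π (x t) = y t from rfl, hy0, sub_zero] at h2
    exact h2
end
end
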